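/- In the root system of type C_n, let γ_1, γ_2 be distinct positive roots with ht(γ_1) ≤ ht(γ_2). If the pair (γ_1, γ_2) is not a 'bad pair' (i.e., it is not the case that (1/2)·ht(γ_2) < ht(γ_1) and ⟨γ_2, γ_1^∨⟩ = 2 with γ_1, γ_2 of the specific form γ_2 = 2(α_i+...+α_{n-1})+β, γ_1 = α_i+...+α_{j-1}+2(α_j+...+α_{n-1})+β), then the reflection s_{γ_1}(γ_2) = γ_2 − ⟨γ_2, γ_1^∨⟩ γ_1 is again a positive root. -/
import Mathlib


namespace CnRoots

/-- The standard basis vector `e_i` of `ℚ^n` (`1`-indexed: `1 ≤ i ≤ n`). -/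
def e (n i : ℕ) : Fin n → ℚ := fun j => if (j : ℕ) + 1 = i then 1 else 0

/-- The standard inner product on `ℚ^n`. -/
def inn {n : ℕ} (x y : Fin n → ℚ) : ℚ := ∑ j, x j * y j

/-- The pairing `⟨x, y^∨⟩ = 2(x,y)/(y,y)` of a vector with the coroot of `y`. -/
def pairing {n : ℕ} (x y : Fin n → ℚ) : ℚ := 2 * inn x y / inn y y

/-- Height of a root of `C_n`, computed by pairing with `ρ^∨`. -/
def ht {n : ℕ} (x : Fin n → ℚ) : ℚ := ∑ j, x j * ((n : ℚ) - (j : ℚ) - 1 / 2)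

/-- Positive roots of `C_n`: `e_i − e_j` and `e_i + e_j` for `1 ≤ i < j ≤ n`, and
`2e_i` for `1 ≤ i ≤ n`. -/
def IsPosRoot (n : ℕ) (γ : Fin n → ℚ) : Prop :=
  (∃ i j : ℕ, 1 ≤ i ∧ i < j ∧ j ≤ n ∧ γ = e n i - e n j) ∨
  (∃ i j : ℕ, 1 ≤ i ∧ i < j ∧ j ≤ n ∧ γ = e n i + e n j) ∨
  (∃ i : ℕ, 1 ≤ i ∧ i ≤ n ∧ γ = (2 : ℚ) • e n i)

/-- A *bad pair* of positive roots of `C_n`: `(1/2)·ht(γ₂) < ht(γ₁)` and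
`⟨γ₂, γ₁^∨⟩ = 2`, with the specific form `γ₂ = 2(α_i + ⋯ + α_{n−1}) + β = 2e_i` and
`γ₁ = α_i + ⋯ + α_{j−1} + 2(α_j + ⋯ + α_{n−1}) + β = e_i + e_j`, `1 ≤ i < j ≤ n`. -/
def BadPair (n : ℕ) (γ₁ γ₂ : Fin n → ℚ) : Prop :=
  ht γ₂ / 2 < ht γ₁ ∧ pairing γ₂ γ₁ = 2 ∧
  ∃ i j : ℕ, 1 ≤ i ∧ i < j ∧ j ≤ n ∧ γ₂ = (2 : ℚ) • e n i ∧ γ₁ = e n i + e n j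

section Helpers
variable {n : ℕ}

lemma inn_add_left (x y z : Fin n → ℚ) : inn (x + y) z = inn x z + inn y z := by
  simp [inn, add_mul, Finset.sum_add_distrib]

lemma inn_sub_left (x y z : Fin n → ℚ) : inn (x - y) z = inn x z - inn y z := by
  simp [inn, sub_mul, Finset.sum_sub_distrib]

lemma inn_smul_left (c : ℚ) (x z : Fin n → ℚ) : inn (c • x) z = c * inn x z := by
  simp [inn, Finset.mul_sum, mul_assoc]

lemma inn_add_right (x y z : Fin n → ℚ) : inn z (x + y) = inn z x + inn z y := by
  simp [inn, mul_add, Finset.sum_add_distrib]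

lemma inn_sub_right (x y z : Fin n → ℚ) : inn z (x - y) = inn z x - inn z y := by
  simp [inn, mul_sub, Finset.sum_sub_distrib]

lemma inn_smul_right (c : ℚ) (x z : Fin n → ℚ) : inn z (c • x) = c * inn z x := by
  simp only [inn, Pi.smul_apply, smul_eq_mul, Finset.mul_sum]
  exact Finset.sum_congr rfl (fun x _ => by ring)

lemma inn_e {i j : ℕ} (h1 : 1 ≤ i) (h2 : i ≤ n) :
    inn (e n i) (e n j) = if i = j then 1 else 0 := by
  have key : ∀ x : Fin n,
      ((if (x : ℕ) + 1 = i then (1:ℚ) else 0) * (if (x : ℕ) + 1 = j then 1 else 0))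
      = if x = (⟨i - 1, by omega⟩ : Fin n) then (if i = j then (1:ℚ) else 0) else 0 := by
    intro x
    by_cases hx : (x : ℕ) + 1 = i
    · have hx' : x = (⟨i - 1, by omega⟩ : Fin n) :=
        Fin.ext (by simp only [Fin.val_mk]; omega)
      rw [if_pos hx, one_mul, hx, if_pos hx']
    · have hx' : x ≠ (⟨i - 1, by omega⟩ : Fin n) := by
        intro h; apply hx; subst h; simp only [Fin.val_mk]; omega
      rw [if_neg hx, zero_mul, if_neg hx']
  unfold inn e
  rw [Finset.sum_congr rfl (fun x _ => key x)]
  simp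

lemma ht_add (x y : Fin n → ℚ) : ht (x + y) = ht x + ht y := by
  simp [ht, add_mul, Finset.sum_add_distrib]

lemma ht_sub (x y : Fin n → ℚ) : ht (x - y) = ht x - ht y := by
  simp [ht, sub_mul, Finset.sum_sub_distrib]

lemma ht_smul (c : ℚ) (x : Fin n → ℚ) : ht (c • x) = c * ht x := by
  simp only [ht, Pi.smul_apply, smul_eq_mul, Finset.mul_sum]
  exact Finset.sum_congr rfl (fun x _ => by ring)

lemma ht_e {i : ℕ} (h1 : 1 ≤ i) (h2 : i ≤ n) :
    ht (e n i) = (n : ℚ) - i + 1 / 2 := by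
  have key : ∀ x : Fin n,
      ((if (x : ℕ) + 1 = i then (1:ℚ) else 0) * ((n : ℚ) - (x : ℚ) - 1 / 2))
      = if x = (⟨i - 1, by omega⟩ : Fin n) then ((n : ℚ) - ((i - 1 : ℕ) : ℚ) - 1 / 2) else 0 := by
    intro x
    by_cases hx : (x : ℕ) + 1 = i
    · have hx' : x = (⟨i - 1, by omega⟩ : Fin n) :=
        Fin.ext (by simp only [Fin.val_mk]; omega)
      have hxv : ((x : ℕ) : ℚ) = ((i - 1 : ℕ) : ℚ) := by norm_cast; omega
      rw [if_pos hx, one_mul, if_pos hx', hxv]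
    · have hx' : x ≠ (⟨i - 1, by omega⟩ : Fin n) := by
        intro h; apply hx; subst h; simp only [Fin.val_mk]; omega
      rw [if_neg hx, zero_mul, if_neg hx']
  unfold ht e
  rw [Finset.sum_congr rfl (fun x _ => key x)]
  simp only [Finset.sum_ite_eq', Finset.mem_univ, if_true]
  rw [Nat.cast_sub h1]
  push_cast
  ring

end Helpers

/-- In the root system of type `C_n`, let `γ₁ ≠ γ₂` be positive roots
with `ht(γ₁) ≤ ht(γ₂)`.  If `(γ₁, γ₂)` is not a bad pair, then the reflection
`s_{γ₁}(γ₂) = γ₂ − ⟨γ₂, γ₁^∨⟩·γ₁` is again a positive root. -/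
theorem reflection_of_non_bad_pair_positive (n : ℕ) (hn : 2 ≤ n) (γ₁ γ₂ : Fin n → ℚ)
    (h₁ : IsPosRoot n γ₁) (h₂ : IsPosRoot n γ₂) (hne : γ₁ ≠ γ₂)
    (hle : ht γ₁ ≤ ht γ₂) (hbad : ¬ BadPair n γ₁ γ₂) :
    IsPosRoot n (γ₂ - pairing γ₂ γ₁ • γ₁) := by
  rcases h₁ with ⟨p, q, hp1, hpq, hqn, rfl⟩ | ⟨p, q, hp1, hpq, hqn, rfl⟩ | ⟨p, hp1, hpn, rfl⟩
  · -- γ₁ = e p - e q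
    have hpn : p ≤ n := by omega
    have hq1 : 1 ≤ q := by omega
    have hpq1 : p ≠ q := by omega
    have hpq2 : q ≠ p := by omega
    rcases h₂ with ⟨a, b, ha1, hab, hbn, rfl⟩ | ⟨a, b, ha1, hab, hbn, rfl⟩ | ⟨a, ha1, han, rfl⟩
    · -- γ₂ = e a - e b
      have han : a ≤ n := by omega
      have hb1 : 1 ≤ b := by omega
      have hab1 : a ≠ b := by omega
      have hab2 : b ≠ a := by omega
      have hnat : a + q ≤ b + p := by
        rw [ht_sub, ht_sub, ht_e hp1 hpn, ht_e hq1 hqn, ht_e ha1 han, ht_e hb1 hbn] at hle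
        have h' : ((a + q : ℕ) : ℚ) ≤ ((b + p : ℕ) : ℚ) := by push_cast; linarith
        exact_mod_cast h'
      by_cases hpa : p = a
      · by_cases hqb : q = b
        · exact (hne (by rw [hpa, hqb])).elim
        · have h1 : a ≠ q := by omega
          have h2 : q ≠ a := by omega
          have h3 : b ≠ q := fun h => hqb h.symm
          have hpair : pairing (e n a - e n b) (e n p - e n q) = 1 := by
            simp [pairing, inn_sub_left, inn_sub_right, inn_e, *] <;> norm_num
          rw [hpair]
          exact Or.inl ⟨q, b, by omega, by omega, hbn, by rw [hpa]; module⟩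
      · by_cases hqb : q = b
        · have h1 : b ≠ p := by omega
          have h2 : a ≠ p := fun h => hpa h.symm
          have h3 : p ≠ b := by omega
          have hpair : pairing (e n a - e n b) (e n p - e n q) = 1 := by
            simp [pairing, inn_sub_left, inn_sub_right, inn_e, *] <;> norm_num
          rw [hpair]
          exact Or.inl ⟨a, p, ha1, by omega, hpn, by rw [hqb]; module⟩
        · by_cases hpb : p = b
          · have h1 : a ≠ q := by omega
            have h2 : a ≠ p := fun h => hpa h.symm
            have h3 : b ≠ q := fun h => hqb h.symm
            have hpair : pairing (e n a - e n b) (e n p - e n q) = -1 := by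
              simp [pairing, inn_sub_left, inn_sub_right, inn_e, *] <;> norm_num
            rw [hpair]
            exact Or.inl ⟨a, q, ha1, by omega, hqn, by rw [hpb]; module⟩
          · by_cases hqa : q = a
            · have h1 : a ≠ p := fun h => hpa h.symm
              have h2 : b ≠ p := fun h => hpb h.symm
              have h3 : b ≠ q := by omega
              have hpair : pairing (e n a - e n b) (e n p - e n q) = -1 := by
                simp [pairing, inn_sub_left, inn_sub_right, inn_e, *] <;> norm_num
              rw [hpair]
              exact Or.inl ⟨p, b, hp1, by omega, hbn, by rw [hqa]; module⟩
            · have h1 : a ≠ p := fun h => hpa h.symm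
              have h2 : a ≠ q := fun h => hqa h.symm
              have h3 : b ≠ p := fun h => hpb h.symm
              have h4 : b ≠ q := fun h => hqb h.symm
              have hpair : pairing (e n a - e n b) (e n p - e n q) = 0 := by
                simp [pairing, inn_sub_left, inn_sub_right, inn_e, *] <;> norm_num
              rw [hpair]
              exact Or.inl ⟨a, b, ha1, hab, hbn, by module⟩
    · -- γ₂ = e a + e b
      have han : a ≤ n := by omega
      have hb1 : 1 ≤ b := by omega
      have hab1 : a ≠ b := by omega
      have hab2 : b ≠ a := by omega
      by_cases hqa : q = a
      · have h1 : a ≠ p := by omega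
        have h2 : b ≠ p := by omega
        have h3 : b ≠ q := by omega
        have h4 : p ≠ a := by omega
        have hpair : pairing (e n a + e n b) (e n p - e n q) = -1 := by
          simp [pairing, inn_add_left, inn_sub_left, inn_sub_right, inn_add_right, inn_e, *] <;>
            norm_num
        rw [hpair]
        exact Or.inr (Or.inl ⟨p, b, hp1, by omega, hbn, by rw [hqa]; module⟩)
      · by_cases hqb : q = b
        · by_cases hpa : p = a
          · have hpair : pairing (e n a + e n b) (e n p - e n q) = 0 := by
              simp [pairing, inn_add_left, inn_sub_left, inn_sub_right, inn_add_right, inn_e, *] <;>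
                norm_num
            rw [hpair]
            exact Or.inr (Or.inl ⟨a, b, ha1, hab, hbn, by module⟩)
          · have h1 : a ≠ p := fun h => hpa h.symm
            have h2 : b ≠ p := by omega
            have h3 : a ≠ q := by omega
            have h4 : p ≠ b := by omega
            have hpair : pairing (e n a + e n b) (e n p - e n q) = -1 := by
              simp [pairing, inn_add_left, inn_sub_left, inn_sub_right, inn_add_right, inn_e, *] <;>
                norm_num
            rw [hpair]
            rcases lt_or_gt_of_ne (show p ≠ a from hpa) with h | h
            · exact Or.inr (Or.inl ⟨p, a, hp1, h, han, by rw [hqb]; module⟩)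
            · exact Or.inr (Or.inl ⟨a, p, ha1, h, hpn, by rw [hqb]; module⟩)
        · by_cases hpa : p = a
          · have h1 : a ≠ q := by omega
            have h2 : b ≠ a := by omega
            have h3 : b ≠ q := fun h => hqb h.symm
            have hpair : pairing (e n a + e n b) (e n p - e n q) = 1 := by
              simp [pairing, inn_add_left, inn_sub_left, inn_sub_right, inn_add_right, inn_e, *] <;>
                norm_num
            rw [hpair]
            rcases lt_or_gt_of_ne (show b ≠ q from h3) with h | h
            · exact Or.inr (Or.inl ⟨b, q, hb1, h, hqn, by rw [hpa]; module⟩)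
            · exact Or.inr (Or.inl ⟨q, b, hq1, h, hbn, by rw [hpa]; module⟩)
          · by_cases hpb : p = b
            · have h1 : a ≠ p := by omega
              have h2 : a ≠ q := by omega
              have h3 : b ≠ q := fun h => hqb h.symm
              have hpair : pairing (e n a + e n b) (e n p - e n q) = 1 := by
                simp [pairing, inn_add_left, inn_sub_left, inn_sub_right, inn_add_right, inn_e, *] <;>
                  norm_num
              rw [hpair]
              exact Or.inr (Or.inl ⟨a, q, ha1, by omega, hqn, by rw [hpb]; module⟩)
            · have h1 : a ≠ p := fun h => hpa h.symm
              have h2 : a ≠ q := fun h => hqa h.symm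
              have h3 : b ≠ p := fun h => hpb h.symm
              have h4 : b ≠ q := fun h => hqb h.symm
              have hpair : pairing (e n a + e n b) (e n p - e n q) = 0 := by
                simp [pairing, inn_add_left, inn_sub_left, inn_sub_right, inn_add_right, inn_e, *] <;>
                  norm_num
              rw [hpair]
              exact Or.inr (Or.inl ⟨a, b, ha1, hab, hbn, by module⟩)
    · -- γ₂ = 2•e a
      by_cases hpa : p = a
      · have h1 : a ≠ q := by omega
        have h2 : q ≠ a := by omega
        have hpair : pairing ((2:ℚ) • e n a) (e n p - e n q) = 2 := by
          simp [pairing, inn_smul_left, inn_sub_left, inn_sub_right, inn_e, *] <;> norm_num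
        rw [hpair]
        exact Or.inr (Or.inr ⟨q, by omega, hqn, by rw [hpa]; module⟩)
      · by_cases hqa : q = a
        · have h1 : a ≠ p := by omega
          have hpair : pairing ((2:ℚ) • e n a) (e n p - e n q) = -2 := by
            simp [pairing, inn_smul_left, inn_sub_left, inn_sub_right, inn_e, *] <;> norm_num
          rw [hpair]
          exact Or.inr (Or.inr ⟨p, hp1, hpn, by rw [hqa]; module⟩)
        · have h1 : a ≠ p := fun h => hpa h.symm
          have h2 : a ≠ q := fun h => hqa h.symm
          have hpair : pairing ((2:ℚ) • e n a) (e n p - e n q) = 0 := by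
            simp [pairing, inn_smul_left, inn_sub_left, inn_sub_right, inn_e, *] <;> norm_num
          rw [hpair]
          exact Or.inr (Or.inr ⟨a, ha1, han, by module⟩)
  · -- γ₁ = e p + e q
    have hpn : p ≤ n := by omega
    have hq1 : 1 ≤ q := by omega
    have hpq1 : p ≠ q := by omega
    have hpq2 : q ≠ p := by omega
    rcases h₂ with ⟨a, b, ha1, hab, hbn, rfl⟩ | ⟨a, b, ha1, hab, hbn, rfl⟩ | ⟨a, ha1, han, rfl⟩
    · -- γ₂ = e a - e b
      have han : a ≤ n := by omega
      have hb1 : 1 ≤ b := by omega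
      have hab1 : a ≠ b := by omega
      have hab2 : b ≠ a := by omega
      have hnat : 2 * n + 1 + a ≤ p + q + b := by
        rw [ht_add, ht_sub, ht_e hp1 hpn, ht_e hq1 hqn, ht_e ha1 han, ht_e hb1 hbn] at hle
        have h' : ((2 * n + 1 + a : ℕ) : ℚ) ≤ ((p + q + b : ℕ) : ℚ) := by push_cast; linarith
        exact_mod_cast h'
      by_cases hpa : p = a
      · exact absurd hnat (by omega)
      · by_cases hqa : q = a
        · exact absurd hnat (by omega)
        · by_cases hpb : p = b
          · have h1 : a ≠ p := by omega
            have h2 : a ≠ q := by omega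
            have h3 : b ≠ q := by omega
            have h4 : q ≠ b := by omega
            have hpair : pairing (e n a - e n b) (e n p + e n q) = -1 := by
              simp [pairing, inn_sub_left, inn_add_left, inn_add_right, inn_sub_right, inn_e, *] <;>
                norm_num
            rw [hpair]
            exact Or.inr (Or.inl ⟨a, q, ha1, by omega, hqn, by rw [hpb]; module⟩)
          · by_cases hqb : q = b
            · have h1 : a ≠ p := fun h => hpa h.symm
              have h2 : a ≠ q := by omega
              have h3 : b ≠ p := fun h => hpb h.symm
              have hpair : pairing (e n a - e n b) (e n p + e n q) = -1 := by
                simp [pairing, inn_sub_left, inn_add_left, inn_add_right, inn_sub_right, inn_e, *] <;>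
                  norm_num
              rw [hpair]
              rcases lt_or_gt_of_ne (show p ≠ a from hpa) with h | h
              · exact Or.inr (Or.inl ⟨p, a, hp1, h, han, by rw [hqb]; module⟩)
              · exact Or.inr (Or.inl ⟨a, p, ha1, h, hpn, by rw [hqb]; module⟩)
            · have h1 : a ≠ p := fun h => hpa h.symm
              have h2 : a ≠ q := fun h => hqa h.symm
              have h3 : b ≠ p := fun h => hpb h.symm
              have h4 : b ≠ q := fun h => hqb h.symm
              have hpair : pairing (e n a - e n b) (e n p + e n q) = 0 := by
                simp [pairing, inn_sub_left, inn_add_left, inn_add_right, inn_sub_right, inn_e, *] <;>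
                  norm_num
              rw [hpair]
              exact Or.inl ⟨a, b, ha1, hab, hbn, by module⟩
    · -- γ₂ = e a + e b
      have han : a ≤ n := by omega
      have hb1 : 1 ≤ b := by omega
      have hab1 : a ≠ b := by omega
      have hab2 : b ≠ a := by omega
      have hnat : a + b ≤ p + q := by
        rw [ht_add, ht_add, ht_e hp1 hpn, ht_e hq1 hqn, ht_e ha1 han, ht_e hb1 hbn] at hle
        have h' : ((a + b : ℕ) : ℚ) ≤ ((p + q : ℕ) : ℚ) := by push_cast; linarith
        exact_mod_cast h'
      by_cases hpa : p = a
      · by_cases hqb : q = b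
        · exact (hne (by rw [hpa, hqb])).elim
        · have h1 : a ≠ q := by omega
          have h2 : b ≠ a := by omega
          have h3 : b ≠ q := fun h => hqb h.symm
          have h4 : q ≠ a := by omega
          have hpair : pairing (e n a + e n b) (e n p + e n q) = 1 := by
            simp [pairing, inn_add_left, inn_add_right, inn_e, *] <;> norm_num
          rw [hpair]
          exact Or.inl ⟨b, q, hb1, by omega, hqn, by rw [hpa]; module⟩
      · by_cases hqa : q = a
        · exact absurd hnat (by omega)
        · by_cases hpb : p = b
          · have h1 : a ≠ p := by omega
            have h2 : a ≠ q := by omega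
            have h3 : b ≠ q := by omega
            have h4 : q ≠ b := by omega
            have hpair : pairing (e n a + e n b) (e n p + e n q) = 1 := by
              simp [pairing, inn_add_left, inn_add_right, inn_e, *] <;> norm_num
            rw [hpair]
            exact Or.inl ⟨a, q, ha1, by omega, hqn, by rw [hpb]; module⟩
          · by_cases hqb : q = b
            · have h1 : a ≠ p := fun h => hpa h.symm
              have h2 : a ≠ q := by omega
              have h3 : b ≠ p := fun h => hpb h.symm
              have hpair : pairing (e n a + e n b) (e n p + e n q) = 1 := by
                simp [pairing, inn_add_left, inn_add_right, inn_e, *] <;> norm_num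
              rw [hpair]
              exact Or.inl ⟨a, p, ha1, by omega, hpn, by rw [hqb]; module⟩
            · have h1 : a ≠ p := fun h => hpa h.symm
              have h2 : a ≠ q := fun h => hqa h.symm
              have h3 : b ≠ p := fun h => hpb h.symm
              have h4 : b ≠ q := fun h => hqb h.symm
              have hpair : pairing (e n a + e n b) (e n p + e n q) = 0 := by
                simp [pairing, inn_add_left, inn_add_right, inn_e, *] <;> norm_num
              rw [hpair]
              exact Or.inr (Or.inl ⟨a, b, ha1, hab, hbn, by module⟩)
    · -- γ₂ = 2•e a
      by_cases hpa : p = a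
      · exfalso
        apply hbad
        refine ⟨?_, ?_, a, q, ha1, by omega, hqn, rfl, by rw [hpa]⟩
        · rw [ht_smul, ht_add, ht_e hp1 hpn, ht_e hq1 hqn, ht_e ha1 han]
          have hqn' : (q : ℚ) ≤ n := by exact_mod_cast hqn
          have hpa' : (p : ℚ) = a := by exact_mod_cast hpa
          linarith
        · have h1 : a ≠ q := by omega
          have h2 : q ≠ a := by omega
          simp [pairing, inn_smul_left, inn_add_left, inn_add_right, inn_e, *] <;> norm_num
      · by_cases hqa : q = a
        · exfalso
          rw [ht_add, ht_smul, ht_e hp1 hpn, ht_e hq1 hqn, ht_e ha1 han] at hle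
          have hnat : 2 * a ≤ p + q := by
            have h' : ((2 * a : ℕ) : ℚ) ≤ ((p + q : ℕ) : ℚ) := by push_cast; linarith
            exact_mod_cast h'
          omega
        · have h1 : a ≠ p := fun h => hpa h.symm
          have h2 : a ≠ q := fun h => hqa h.symm
          have hpair : pairing ((2:ℚ) • e n a) (e n p + e n q) = 0 := by
            simp [pairing, inn_smul_left, inn_add_left, inn_add_right, inn_e, *] <;> norm_num
          rw [hpair]
          exact Or.inr (Or.inr ⟨a, ha1, han, by module⟩)
  · -- γ₁ = 2•e p
    rcases h₂ with ⟨a, b, ha1, hab, hbn, rfl⟩ | ⟨a, b, ha1, hab, hbn, rfl⟩ | ⟨a, ha1, han, rfl⟩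
    · -- γ₂ = e a - e b
      have han : a ≤ n := by omega
      have hb1 : 1 ≤ b := by omega
      by_cases hpa : p = a
      · exfalso
        rw [ht_smul, ht_sub, ht_e hp1 hpn, ht_e ha1 han, ht_e hb1 hbn] at hle
        have hnat : 2 * n + 1 + a ≤ 2 * p + b := by
          have h' : ((2 * n + 1 + a : ℕ) : ℚ) ≤ ((2 * p + b : ℕ) : ℚ) := by push_cast; linarith
          exact_mod_cast h'
        omega
      · by_cases hpb : p = b
        · have h1 : a ≠ p := by omega
          have h2 : a ≠ b := by omega
          have hpair : pairing (e n a - e n b) ((2:ℚ) • e n p) = -1 := by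
            simp [pairing, inn_sub_left, inn_smul_left, inn_smul_right, inn_e, *] <;> norm_num
          rw [hpair]
          exact Or.inr (Or.inl ⟨a, b, ha1, hab, hbn, by rw [hpb]; module⟩)
        · have h1 : a ≠ p := fun h => hpa h.symm
          have h2 : b ≠ p := fun h => hpb h.symm
          have hpair : pairing (e n a - e n b) ((2:ℚ) • e n p) = 0 := by
            simp [pairing, inn_sub_left, inn_smul_left, inn_smul_right, inn_e, *] <;> norm_num
          rw [hpair]
          exact Or.inl ⟨a, b, ha1, hab, hbn, by module⟩
    · -- γ₂ = e a + e b
      have han : a ≤ n := by omega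
      have hb1 : 1 ≤ b := by omega
      by_cases hpa : p = a
      · exfalso
        rw [ht_smul, ht_add, ht_e hp1 hpn, ht_e ha1 han, ht_e hb1 hbn] at hle
        have hnat : a + b ≤ 2 * p := by
          have h' : ((a + b : ℕ) : ℚ) ≤ ((2 * p : ℕ) : ℚ) := by push_cast; linarith
          exact_mod_cast h'
        omega
      · by_cases hpb : p = b
        · have h1 : a ≠ p := by omega
          have h2 : a ≠ b := by omega
          have hpair : pairing (e n a + e n b) ((2:ℚ) • e n p) = 1 := by
            simp [pairing, inn_add_left, inn_smul_left, inn_smul_right, inn_e, *] <;> norm_num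
          rw [hpair]
          exact Or.inl ⟨a, b, ha1, hab, hbn, by rw [hpb]; module⟩
        · have h1 : a ≠ p := fun h => hpa h.symm
          have h2 : b ≠ p := fun h => hpb h.symm
          have hpair : pairing (e n a + e n b) ((2:ℚ) • e n p) = 0 := by
            simp [pairing, inn_add_left, inn_smul_left, inn_smul_right, inn_e, *] <;> norm_num
          rw [hpair]
          exact Or.inr (Or.inl ⟨a, b, ha1, hab, hbn, by module⟩)
    · -- γ₂ = 2•e a
      by_cases hpa : p = a
      · exact (hne (by rw [hpa])).elim
      · have h1 : a ≠ p := fun h => hpa h.symm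
        have hpair : pairing ((2:ℚ) • e n a) ((2:ℚ) • e n p) = 0 := by
          simp [pairing, inn_smul_left, inn_smul_right, inn_e, *] <;> norm_num
        rw [hpair]
        exact Or.inr (Or.inr ⟨a, ha1, han, by module⟩)


end CnRoots
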